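/- Condition (M2) does not imply condition (M1): there exists a measure μ : List ℤ → ℤ such that μ satisfies (M2) — for all nonempty lists l₁, l₂ with every element of l₁ strictly less than every element of l₂, μ l₁ < μ l₂ — yet μ violates (M1): there exist lists l₁, l₂ of equal length with l₁ pointwise ≤ l₂ and μ l₁ > μ l₂. (A witness is any selection function μ that always returns an element of its nonempty argument but whose choice of position depends on the values, e.g. μ (x :: xs) = last of (x :: xs) if x = 0 and x otherwise, with μ [] = 0.) -/

import Mathlib

/-- `uprec l₁ l₂`: every element of `l₁` is strictly less than every element of `l₂`. -/
def uprec (l₁ l₂ : List ℤ) : Prop := ∀ x ∈ l₁, ∀ y ∈ l₂, x < y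

/-- A selection function: head unless head is 0, in which case last. -/
def mu : List ℤ → ℤ
  | [] => 0
  | x :: xs => if x = 0 then (x :: xs).getLast (List.cons_ne_nil _ _) else x

lemma mu_mem : ∀ l : List ℤ, l ≠ [] → mu l ∈ l := by
  intro l hl
  cases l with
  | nil => exact absurd rfl hl
  | cons x xs =>
    rw [mu]
    split_ifs
    · exact List.getLast_mem _
    · exact List.mem_cons_self

theorem stmt_13 : ∃ μ : List ℤ → ℤ,
    (∀ l₁ l₂ : List ℤ, l₁ ≠ [] → l₂ ≠ [] → uprec l₁ l₂ → μ l₁ < μ l₂) ∧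
    (∃ l₁ l₂ : List ℤ, List.Forall₂ (· ≤ ·) l₁ l₂ ∧ μ l₂ < μ l₁) := by
  refine ⟨mu, ?_, ?_⟩
  · intro l₁ l₂ h₁ h₂ h
    exact h _ (mu_mem l₁ h₁) _ (mu_mem l₂ h₂)
  · refine ⟨[0, 5], [1, 5], ?_, ?_⟩
    · refine List.Forall₂.cons (by norm_num) (List.Forall₂.cons le_rfl List.Forall₂.nil)
    · decide
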